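/- (Peleg's first induction step) Let C = {S_1,…,S_k} be a minimal balanced collection on N with weights λ, let p ∉ N, and let I ⊆ {1,…,k} satisfy ∑_{i∈I} λ_{S_i} = 1. Then the collection C' = {S_i ∪ {p} : i ∈ I} ∪ {S_j : j ∉ I} is a minimal balanced collection on N ∪ {p}. -/
import Mathlib


open Finset

def IsBalancedOn {α : Type*} [DecidableEq α] (M : Finset α) (B : Finset (Finset α))
    (w : Finset α → ℝ) : Prop :=
  (∀ S ∈ B, S ⊆ M ∧ S.Nonempty) ∧ (∀ S ∈ B, 0 < w S) ∧
  ∀ i ∈ M, ∑ S ∈ B, w S * (if i ∈ S then (1 : ℝ) else 0) = 1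

def IsBalanced {α : Type*} [DecidableEq α] (M : Finset α) (B : Finset (Finset α)) : Prop :=
  ∃ w : Finset α → ℝ, IsBalancedOn M B w

def IsMinimalBalanced {α : Type*} [DecidableEq α] (M : Finset α)
    (B : Finset (Finset α)) : Prop :=
  IsBalanced M B ∧ ∀ B' ⊆ B, B' ≠ B → ¬ IsBalanced M B'

theorem stmt11 {α : Type*} [DecidableEq α]
    (N : Finset α) (p : α) (hp : p ∉ N)
    (C : Finset (Finset α)) (lam : Finset α → ℝ)
    (hC : IsBalancedOn N C lam) (hmin : IsMinimalBalanced N C)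
    (I : Finset (Finset α)) (hI : I ⊆ C) (hsum : ∑ S ∈ I, lam S = 1) :
    IsMinimalBalanced (insert p N) ((I.image (insert p ·)) ∪ (C \ I)) := by
  obtain ⟨hCsub, hCpos, hCsum⟩ := hC
  have hpnotin : ∀ S ∈ C, p ∉ S := fun S hS hps => hp ((hCsub S hS).1 hps)
  set C' : Finset (Finset α) := (I.image (insert p ·)) ∪ (C \ I) with hC'def
  -- injectivity of insert p on I
  have hinj : ∀ a ∈ I, ∀ b ∈ I, insert p a = insert p b → a = b := by
    intro a ha b hb hab
    have hpa : p ∉ a := hpnotin a (hI ha)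
    have hpb : p ∉ b := hpnotin b (hI hb)
    have : (insert p a).erase p = (insert p b).erase p := by rw [hab]
    rwa [Finset.erase_insert hpa, Finset.erase_insert hpb] at this
  have hdisj : Disjoint (I.image (insert p ·)) (C \ I) := by
    rw [Finset.disjoint_left]
    intro T hT hT2
    obtain ⟨S, hS, rfl⟩ := Finset.mem_image.1 hT
    exact hpnotin _ (Finset.mem_sdiff.1 hT2).1 (Finset.mem_insert_self p S)
  have hcardC' : C'.card = C.card := by
    rw [hC'def, Finset.card_union_of_disjoint hdisj, Finset.card_image_of_injOn hinj,
      add_comm, Finset.card_sdiff_add_card_eq_card hI]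
  -- case analysis for members of C'
  have hcase : ∀ T ∈ C', (p ∈ T ∧ T.erase p ∈ I ∧ insert p (T.erase p) = T) ∨
      (p ∉ T ∧ T ∈ C \ I ∧ T.erase p = T) := by
    intro T hT
    rcases Finset.mem_union.1 hT with h | h
    · obtain ⟨S, hS, rfl⟩ := Finset.mem_image.1 h
      have hpS : p ∉ S := hpnotin S (hI hS)
      left
      exact ⟨Finset.mem_insert_self p S, by rw [Finset.erase_insert hpS]; exact hS,
        by rw [Finset.erase_insert hpS]⟩
    · have hpT : p ∉ T := hpnotin T (Finset.mem_sdiff.1 h).1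
      exact Or.inr ⟨hpT, h, Finset.erase_eq_of_notMem hpT⟩
  constructor
  · -- balanced
    refine ⟨fun T => if p ∈ T then lam (T.erase p) else lam T, ?_, ?_, ?_⟩
    · intro T hT
      rcases hcase T hT with ⟨hpT, hTI, hTeq⟩ | ⟨hpT, hTC, _⟩
      · refine ⟨?_, ⟨p, hpT⟩⟩
        rw [← hTeq]
        exact Finset.insert_subset_insert p (hCsub _ (hI hTI)).1
      · exact ⟨(hCsub T (Finset.mem_sdiff.1 hTC).1).1.trans (Finset.subset_insert p N),
          (hCsub T (Finset.mem_sdiff.1 hTC).1).2⟩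
    · intro T hT
      rcases hcase T hT with ⟨hpT, hTI, _⟩ | ⟨hpT, hTC, hTeq⟩
      · simp only [if_pos hpT]
        exact hCpos _ (hI hTI)
      · simp only [if_neg hpT]
        exact hCpos _ (Finset.mem_sdiff.1 hTC).1
    · intro i hi
      rw [hC'def, Finset.sum_union hdisj, Finset.sum_image hinj]
      have himg : ∀ S ∈ I, (if p ∈ insert p S then lam ((insert p S).erase p)
          else lam (insert p S)) * (if i ∈ insert p S then (1:ℝ) else 0)
          = lam S * (if i ∈ insert p S then (1:ℝ) else 0) := by
        intro S hS
        rw [if_pos (Finset.mem_insert_self p S), Finset.erase_insert (hpnotin S (hI hS))]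
      rw [Finset.sum_congr rfl himg]
      have hsd : ∀ T ∈ C \ I, (if p ∈ T then lam (T.erase p) else lam T) *
          (if i ∈ T then (1:ℝ) else 0) = lam T * (if i ∈ T then (1:ℝ) else 0) := by
        intro T hT
        rw [if_neg (hpnotin T (Finset.mem_sdiff.1 hT).1)]
      rw [Finset.sum_congr rfl hsd]
      rcases Finset.mem_insert.1 hi with rfl | hiN
      · have h1 : ∀ S ∈ I, lam S * (if i ∈ insert i S then (1:ℝ) else 0) = lam S := by
          intro S hS; rw [if_pos (Finset.mem_insert_self i S), mul_one]
        have h2 : ∀ T ∈ C \ I, lam T * (if i ∈ T then (1:ℝ) else 0) = 0 := by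
          intro T hT
          rw [if_neg (hpnotin T (Finset.mem_sdiff.1 hT).1), mul_zero]
        rw [Finset.sum_congr rfl h1, Finset.sum_congr rfl h2, hsum, Finset.sum_const_zero,
          add_zero]
      · have hip : i ≠ p := fun h => hp (h ▸ hiN)
        have h1 : ∀ S ∈ I, lam S * (if i ∈ insert p S then (1:ℝ) else 0)
            = lam S * (if i ∈ S then (1:ℝ) else 0) := by
          intro S hS
          congr 1
          simp [Finset.mem_insert, hip]
        rw [Finset.sum_congr rfl h1, add_comm, Finset.sum_sdiff hI]
        exact hCsum i hiN
  · -- minimality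
    intro B' hB'sub hB'ne hbal
    obtain ⟨w, hw1, hw2, hw3⟩ := hbal
    have hcaseB : ∀ T ∈ B', (p ∈ T ∧ T.erase p ∈ I ∧ insert p (T.erase p) = T) ∨
        (p ∉ T ∧ T ∈ C \ I ∧ T.erase p = T) := fun T hT => hcase T (hB'sub hT)
    set B'' : Finset (Finset α) := B'.image (·.erase p) with hB''def
    have hinjE : ∀ a ∈ B', ∀ b ∈ B', a.erase p = b.erase p → a = b := by
      intro a ha b hb hab
      rcases hcaseB a ha with ⟨hpa, haI, haeq⟩ | ⟨hpa, haC, haeq⟩ <;>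
        rcases hcaseB b hb with ⟨hpb, hbI, hbeq⟩ | ⟨hpb, hbC, hbeq⟩
      · rw [← haeq, ← hbeq, hab]
      · exact absurd (hab ▸ haI : b.erase p ∈ I) (fun h =>
          (Finset.mem_sdiff.1 hbC).2 (hbeq ▸ h))
      · exact absurd (hab.symm ▸ hbI : a.erase p ∈ I) (fun h =>
          (Finset.mem_sdiff.1 haC).2 (haeq ▸ h))
      · rw [← haeq, ← hbeq, hab]
    have hB''sub : B'' ⊆ C := by
      intro S hS
      obtain ⟨T, hT, rfl⟩ := Finset.mem_image.1 hS
      rcases hcaseB T hT with ⟨_, hTI, _⟩ | ⟨_, hTC, hTeq⟩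
      · exact hI hTI
      · rw [hTeq]; exact (Finset.mem_sdiff.1 hTC).1
    -- μ computes w correctly on erased sets
    have hmu : ∀ T ∈ B',
        (if insert p (T.erase p) ∈ B' then w (insert p (T.erase p)) else w (T.erase p))
          = w T := by
      intro T hT
      rcases hcaseB T hT with ⟨hpT, hTI, hTeq⟩ | ⟨hpT, hTC, hTeq⟩
      · rw [hTeq, if_pos hT]
      · rw [hTeq, if_neg]
        intro hmem
        rcases hcase _ (hB'sub hmem) with ⟨_, hTI2, _⟩ | ⟨hpT2, _, _⟩
        · rw [Finset.erase_insert hpT] at hTI2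
          exact (Finset.mem_sdiff.1 hTC).2 hTI2
        · exact hpT2 (Finset.mem_insert_self p T)
    have hB''bal : IsBalanced N B'' := by
      refine ⟨fun S => if insert p S ∈ B' then w (insert p S) else w S, ?_, ?_, ?_⟩
      · exact fun S hS => hCsub S (hB''sub hS)
      · intro S hS
        obtain ⟨T, hT, rfl⟩ := Finset.mem_image.1 hS
        dsimp only
        rw [hmu T hT]
        exact hw2 T hT
      · intro i hi
        have hip : i ≠ p := fun h => hp (h ▸ hi)
        rw [hB''def, Finset.sum_image hinjE]
        have : ∀ T ∈ B',
            (if insert p (T.erase p) ∈ B' then w (insert p (T.erase p)) else w (T.erase p)) *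
              (if i ∈ T.erase p then (1:ℝ) else 0) = w T * (if i ∈ T then (1:ℝ) else 0) := by
          intro T hT
          rw [hmu T hT]
          congr 1
          simp [Finset.mem_erase, hip]
        rw [Finset.sum_congr rfl this]
        exact hw3 i (Finset.mem_insert_of_mem hi)
    have hB''eq : B'' = C := by
      by_contra h
      exact hmin.2 B'' hB''sub h hB''bal
    have hcard : B'.card = C'.card := by
      rw [hcardC', ← hB''eq, hB''def, Finset.card_image_of_injOn hinjE]
    exact hB'ne (Finset.eq_of_subset_of_card_le hB'sub (le_of_eq hcard.symm))
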